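/- Assume f satisfies (ND) and (MF) and f(0) = 0 < f'(0). Let U be a bounded entire solution of u_t = u_xx + f(u) with U_x not identically zero, satisfying (c0) and (ci)–(civ), and suppose that for every t ∈ ℝ one has U(x,t) → 0 and U_x(x,t) → 0 as x → −∞ and as x → +∞. If U(·,t₀) has at least one zero for some t₀ ∈ ℝ, then for every t < t₀ the function U(·,t) has exactly one zero. -/

import Mathlib

open Filter Set Topology

noncomputable section

/-- first spatial derivative `u_x`. -/
def pdx (u : ℝ → ℝ → ℝ) (x t : ℝ) : ℝ := deriv (fun y => u y t) x

/-- second spatial derivative `u_xx`. -/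
def pdxx (u : ℝ → ℝ → ℝ) (x t : ℝ) : ℝ := deriv (fun y => pdx u y t) x

/-- time derivative `u_t`. -/
def pdt (u : ℝ → ℝ → ℝ) (x t : ℝ) : ℝ := deriv (fun s => u x s) t

/-- Condition (ND): at each zero of `f`, `f` is C¹ on a neighborhood and `f'` is nonzero there. -/
def CondND (f : ℝ → ℝ) : Prop :=
  ∀ γ : ℝ, f γ = 0 → (∃ s ∈ nhds γ, ContDiffOn ℝ 1 f s) ∧ deriv f γ ≠ 0

/-- Condition (MF): `f` is globally Lipschitz and `f s = s/2` for `|s|` large. -/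
def CondMF (f : ℝ → ℝ) : Prop :=
  (∃ K : NNReal, LipschitzWith K f) ∧ ∃ κ : ℝ, 0 < κ ∧ ∀ s : ℝ, κ < |s| → f s = s / 2

/-- A bounded classical solution of `u_t = u_xx + f(u)` on `ℝ × [0,∞)` with initial datum `u₀`. -/
def IsBddSolutionHalf (f : ℝ → ℝ) (u : ℝ → ℝ → ℝ) (u₀ : ℝ → ℝ) : Prop :=
  (∃ M, ∀ x t : ℝ, 0 ≤ t → |u x t| ≤ M) ∧
  ContinuousOn (fun p : ℝ × ℝ => u p.1 p.2) {p : ℝ × ℝ | 0 ≤ p.2} ∧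
  (∀ x : ℝ, u x 0 = u₀ x) ∧
  (∀ x t : ℝ, 0 < t → DifferentiableAt ℝ (fun y => u y t) x) ∧
  (∀ x t : ℝ, 0 < t → DifferentiableAt ℝ (fun y => pdx u y t) x) ∧
  (∀ x t : ℝ, 0 < t → DifferentiableAt ℝ (fun s => u x s) t) ∧
  ContinuousOn (fun p : ℝ × ℝ => pdx u p.1 p.2) {p : ℝ × ℝ | 0 < p.2} ∧
  ContinuousOn (fun p : ℝ × ℝ => pdxx u p.1 p.2) {p : ℝ × ℝ | 0 < p.2} ∧
  ContinuousOn (fun p : ℝ × ℝ => pdt u p.1 p.2) {p : ℝ × ℝ | 0 < p.2} ∧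
  (∀ x t : ℝ, 0 < t → pdt u x t = pdxx u x t + f (u x t))

/-- A bounded entire classical solution of `u_t = u_xx + f(u)` on `ℝ × ℝ`. -/
def IsEntireSolution (f : ℝ → ℝ) (U : ℝ → ℝ → ℝ) : Prop :=
  (∃ M, ∀ x t : ℝ, |U x t| ≤ M) ∧
  Continuous (fun p : ℝ × ℝ => U p.1 p.2) ∧
  (∀ x t : ℝ, DifferentiableAt ℝ (fun y => U y t) x) ∧
  (∀ x t : ℝ, DifferentiableAt ℝ (fun y => pdx U y t) x) ∧
  (∀ x t : ℝ, DifferentiableAt ℝ (fun s => U x s) t) ∧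
  Continuous (fun p : ℝ × ℝ => pdx U p.1 p.2) ∧
  Continuous (fun p : ℝ × ℝ => pdxx U p.1 p.2) ∧
  Continuous (fun p : ℝ × ℝ => pdt U p.1 p.2) ∧
  (∀ x t : ℝ, pdt U x t = pdxx U x t + f (U x t))

/-- Condition (NC): at some positive time the solution has finitely many critical points. -/
def CondNC (u : ℝ → ℝ → ℝ) : Prop :=
  ∃ t : ℝ, 0 < t ∧ {x : ℝ | pdx u x t = 0}.Finite

/-- A steady state: a bounded C² function with `φ'' + f(φ) = 0` on `ℝ`. -/
def IsSteadyState (f : ℝ → ℝ) (φ : ℝ → ℝ) : Prop :=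
  ContDiff ℝ 2 φ ∧ (∃ M, ∀ x, |φ x| ≤ M) ∧ ∀ x, deriv (deriv φ) x + f (φ x) = 0

/-- The spatial trajectory `τ(φ) = {(φ(x), φ'(x)) : x ∈ ℝ}`. -/
def traj (φ : ℝ → ℝ) : Set (ℝ × ℝ) := Set.range fun x => (φ x, deriv φ x)

/-- A nonconstant periodic solution of the steady state equation. -/
def IsNonconstPeriodicSol (f : ℝ → ℝ) (ψ : ℝ → ℝ) : Prop :=
  IsSteadyState f ψ ∧ (∃ p > 0, Function.Periodic ψ p) ∧ ∃ x y, ψ x ≠ ψ y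

/-- `𝒫₀`: the union of all nonconstant periodic orbits of the planar system. -/
def P0 (f : ℝ → ℝ) : Set (ℝ × ℝ) :=
  {p | ∃ ψ, IsNonconstPeriodicSol f ψ ∧ p ∈ traj ψ}

/-- The ω-limit set (with locally uniform convergence); for sequences `tₙ → -∞`
replace `atTop` by `atBot` in the first condition. -/
def omegaSet (u : ℝ → ℝ → ℝ) : Set (ℝ → ℝ) :=
  {φ | ∃ tn : ℕ → ℝ, Tendsto tn atTop atTop ∧
    TendstoLocallyUniformly (fun n x => u x (tn n)) φ atTop}

/-- Conditions (ci)–(civ) on an entire solution `U`. -/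
def SideConds (U : ℝ → ℝ → ℝ) : Prop :=
  (∃ m : ℕ, ∀ t : ℝ,
      {x : ℝ | U x t = 0}.Finite ∧ {x : ℝ | U x t = 0}.ncard ≤ m ∧
      {x : ℝ | pdx U x t = 0}.Finite ∧ {x : ℝ | pdx U x t = 0}.ncard ≤ m) ∧
  (∀ x t : ℝ, (U x t = 0 → pdx U x t ≠ 0) ∧ (pdx U x t = 0 → pdxx U x t ≠ 0)) ∧
  (∀ t : ℝ, (∃ L, Tendsto (fun x => U x t) atBot (nhds L)) ∧
            (∃ L, Tendsto (fun x => U x t) atTop (nhds L))) ∧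
  (∀ t : ℝ, Function.Injective fun x => (U x t, pdx U x t)) ∧
  (∀ t x : ℝ, (IsLocalMin (fun y => U y t) x → U x t ≤ 0) ∧
              (IsLocalMax (fun y => U y t) x → 0 ≤ U x t))

/-- `Λ_out`, the outer loop associated with `Π₀`. -/
def outerLoop (Pi0 : Set (ℝ × ℝ)) : Set (ℝ × ℝ) :=
  closure Pi0 \ (Pi0 ∪ {((0 : ℝ), (0 : ℝ))})

/-- `Λ` is a heteroclinic loop with limiting equilibria `γm < 0 < γp` and standing waves
`Φp` (increasing) and `Φm` (decreasing). -/
def IsHeteroclinicLoop (f : ℝ → ℝ) (Λ : Set (ℝ × ℝ)) (γm γp : ℝ) (Φp Φm : ℝ → ℝ) : Prop :=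
  γm < 0 ∧ 0 < γp ∧ f γm = 0 ∧ f γp = 0 ∧
  IsSteadyState f Φp ∧ StrictMono Φp ∧
  Tendsto Φp atBot (nhds γm) ∧ Tendsto Φp atTop (nhds γp) ∧
  IsSteadyState f Φm ∧ StrictAnti Φm ∧
  Tendsto Φm atBot (nhds γp) ∧ Tendsto Φm atTop (nhds γm) ∧
  Λ = insert ((γm : ℝ), (0 : ℝ)) (insert ((γp : ℝ), (0 : ℝ)) (traj Φp ∪ traj Φm))

/-- `Λ` is a homoclinic loop with equilibrium `γ` and ground state `Φ` (normalized by `Φ'(0) = 0`). -/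
def IsHomoclinicLoop (f : ℝ → ℝ) (Λ : Set (ℝ × ℝ)) (γ : ℝ) (Φ : ℝ → ℝ) : Prop :=
  f γ = 0 ∧ IsSteadyState f Φ ∧ (∃ x y, Φ x ≠ Φ y) ∧
  Tendsto (fun x => (Φ x, deriv Φ x)) atBot (nhds ((γ : ℝ), (0 : ℝ))) ∧
  Tendsto (fun x => (Φ x, deriv Φ x)) atTop (nhds ((γ : ℝ), (0 : ℝ))) ∧
  deriv Φ 0 = 0 ∧
  Λ = insert ((γ : ℝ), (0 : ℝ)) (traj Φ)

/-! ### Helper lemmas -/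

lemma cont_of_hasDerivAt {φ ψ : ℝ → ℝ} (h : ∀ x, HasDerivAt φ (ψ x) x) : Continuous φ :=
  continuous_iff_continuousAt.mpr fun x => (h x).continuousAt

lemma ev_pos_right {φ : ℝ → ℝ} {a d : ℝ} (hd : HasDerivAt φ d a) (h0 : φ a = 0)
    (hdp : 0 < d) : ∀ᶠ x in 𝓝[>] a, 0 < φ x := by
  have hs : Tendsto (slope φ a) (𝓝[≠] a) (𝓝 d) := hasDerivAt_iff_tendsto_slope.1 hd
  have hev : ∀ᶠ x in 𝓝[≠] a, 0 < slope φ a x := hs.eventually_const_lt hdp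
  have hle : 𝓝[>] a ≤ 𝓝[≠] a := nhdsWithin_mono a fun x hx => ne_of_gt hx
  filter_upwards [hev.filter_mono hle, self_mem_nhdsWithin] with x hx hxa
  have hxa' : (0:ℝ) < x - a := sub_pos.2 hxa
  have := mul_pos hx hxa'
  rw [slope_def_field, div_mul_cancel₀ _ (ne_of_gt hxa')] at this
  simpa [h0] using this

lemma ev_neg_left {φ : ℝ → ℝ} {a d : ℝ} (hd : HasDerivAt φ d a) (h0 : φ a = 0)
    (hdp : 0 < d) : ∀ᶠ x in 𝓝[<] a, φ x < 0 := by
  have hs : Tendsto (slope φ a) (𝓝[≠] a) (𝓝 d) := hasDerivAt_iff_tendsto_slope.1 hd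
  have hev : ∀ᶠ x in 𝓝[≠] a, 0 < slope φ a x := hs.eventually_const_lt hdp
  have hle : 𝓝[<] a ≤ 𝓝[≠] a := nhdsWithin_mono a fun x hx => ne_of_lt hx
  filter_upwards [hev.filter_mono hle, self_mem_nhdsWithin] with x hx hxa
  have hxa' : x - a < 0 := sub_neg.2 hxa
  have := mul_neg_of_pos_of_neg hx hxa'
  rw [slope_def_field, div_mul_cancel₀ _ (ne_of_lt hxa')] at this
  simpa [h0] using this

lemma ev_neg_right {φ : ℝ → ℝ} {a d : ℝ} (hd : HasDerivAt φ d a) (h0 : φ a = 0)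
    (hdn : d < 0) : ∀ᶠ x in 𝓝[>] a, φ x < 0 := by
  have := ev_pos_right (hd.neg) (by simp [h0]) (by linarith)
  filter_upwards [this] with x hx
  simpa using hx

lemma ev_pos_left {φ : ℝ → ℝ} {a d : ℝ} (hd : HasDerivAt φ d a) (h0 : φ a = 0)
    (hdn : d < 0) : ∀ᶠ x in 𝓝[<] a, 0 < φ x := by
  have := ev_neg_left (hd.neg) (by simp [h0]) (by linarith)
  filter_upwards [this] with x hx
  simpa using hx

lemma sign_dichotomy {φ : ℝ → ℝ} (hc : Continuous φ) {s : Set ℝ} (hs : s.OrdConnected)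
    (hne : ∀ x ∈ s, φ x ≠ 0) : (∀ x ∈ s, 0 < φ x) ∨ (∀ x ∈ s, φ x < 0) := by
  by_contra hcon
  push_neg at hcon
  obtain ⟨⟨p, hp, hple⟩, ⟨q, hq, hqge⟩⟩ := hcon
  have hp' : φ p < 0 := lt_of_le_of_ne hple (hne p hp)
  have hq' : 0 < φ q := lt_of_le_of_ne hqge (Ne.symm (hne q hq))
  have h0 : (0:ℝ) ∈ uIcc (φ p) (φ q) := by
    rw [mem_uIcc]; left; exact ⟨hp'.le, hq'.le⟩
  obtain ⟨c, hc', h0'⟩ := intermediate_value_uIcc hc.continuousOn h0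
  exact hne c (hs.uIcc_subset hp hq hc') h0'

lemma mono_pair {φ ψ : ℝ → ℝ} (hd : ∀ x, HasDerivAt φ (ψ x) x) {x y : ℝ} (hxy : x < y)
    (hψ : ∀ z ∈ Ioo x y, 0 < ψ z) : φ x < φ y := by
  have : StrictMonoOn φ (Icc x y) := by
    refine strictMonoOn_of_deriv_pos (convex_Icc x y)
      ((cont_of_hasDerivAt hd).continuousOn) ?_
    intro z hz
    rw [interior_Icc] at hz
    rw [(hd z).deriv]
    exact hψ z hz
  exact this (left_mem_Icc.2 hxy.le) (right_mem_Icc.2 hxy.le) hxy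

lemma anti_pair {φ ψ : ℝ → ℝ} (hd : ∀ x, HasDerivAt φ (ψ x) x) {x y : ℝ} (hxy : x < y)
    (hψ : ∀ z ∈ Ioo x y, ψ z < 0) : φ y < φ x := by
  have := mono_pair (φ := fun z => -φ z) (ψ := fun z => -ψ z)
    (fun z => (hd z).neg) hxy (fun z hz => by simpa using hψ z hz)
  simpa using this

/-! ### The entry-arc package and the crossing (comparison) lemma -/

structure EntryPkg (φ ψ : ℝ → ℝ) (S : Set ℝ) (l : Filter ℝ) (b w : ℝ) : Prop where
  opn : IsOpen S
  pre : IsPreconnected S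
  pos : ∀ x ∈ S, 0 < φ x ∧ φ x < φ b ∧ 0 < ψ x
  ltb : ∀ x ∈ S, x < b
  seg : ∀ x ∈ S, Ioo x b ⊆ S
  ψb : ψ b = 0
  nebot : l.NeBot
  mem : ∀ᶠ x in l, x ∈ S
  small : ∀ x₀ ∈ S, ∀ᶠ x in l, x < x₀
  base : ∀ P : ℝ → Prop, (∀ᶠ x in l, P x) → ∃ x₁ ∈ S, ∀ x ∈ S, x < x₁ → P x
  tendφ : Tendsto φ l (𝓝 0)
  tendψ : Tendsto ψ l (𝓝 w)

lemma cross_open {φ ψ : ℝ → ℝ} (hφc : Continuous φ) (hψc : Continuous ψ)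
    {S₁ : Set ℝ} (hS₁o : IsOpen S₁)
    (mono₁ : ∀ x ∈ S₁, ∀ y ∈ S₁, x < y → φ x < φ y) :
    IsOpen {y | ∃ x ∈ S₁, φ x = φ y ∧ ψ x < ψ y} := by
  rw [isOpen_iff_mem_nhds]
  rintro y₀ ⟨x₀, hx₀S, hφeq, hψlt⟩
  set ε := (ψ y₀ - ψ x₀) / 2 with hε
  have hεpos : 0 < ε := by rw [hε]; linarith
  -- find δ > 0 such that points δ-close to x₀ are in S₁ and have ψ < ψ x₀ + ε
  have hev : ∀ᶠ z in 𝓝 x₀, z ∈ S₁ ∧ ψ z < ψ x₀ + ε := by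
    filter_upwards [hS₁o.mem_nhds hx₀S,
      (hψc.tendsto x₀).eventually_lt_const (lt_add_of_pos_right _ hεpos)] with z h1 h2
    exact ⟨h1, h2⟩
  obtain ⟨δ, hδpos, hδ⟩ := Metric.eventually_nhds_iff.1 hev
  have hmem : ∀ z : ℝ, |z - x₀| < δ → z ∈ S₁ ∧ ψ z < ψ x₀ + ε := by
    intro z hz; exact hδ (by rwa [Real.dist_eq])
  have habs : ∀ r : ℝ, 0 ≤ r → r < δ → |x₀ - r - x₀| < δ ∧ |x₀ + r - x₀| < δ := by
    intro r h0 h1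
    constructor
    · rw [show x₀ - r - x₀ = -r by ring, abs_neg, abs_of_nonneg h0]; exact h1
    · rw [show x₀ + r - x₀ = r by ring, abs_of_nonneg h0]; exact h1
  have hxm : (x₀ - δ/2) ∈ S₁ := (hmem (x₀ - δ/2) (habs (δ/2) (by linarith) (by linarith)).1).1
  have hxp : (x₀ + δ/2) ∈ S₁ := (hmem (x₀ + δ/2) (habs (δ/2) (by linarith) (by linarith)).2).1
  have hum : φ (x₀ - δ/2) < φ x₀ := mono₁ _ hxm _ hx₀S (by linarith)
  have hup : φ x₀ < φ (x₀ + δ/2) := mono₁ _ hx₀S _ hxp (by linarith)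
  have hNopen : IsOpen (φ ⁻¹' (Ioo (φ (x₀ - δ/2)) (φ (x₀ + δ/2))) ∩ ψ ⁻¹' (Ioi (ψ x₀ + ε))) :=
    (isOpen_Ioo.preimage hφc).inter (isOpen_Ioi.preimage hψc)
  refine mem_nhds_iff.2 ⟨_, ?_, hNopen, ?_⟩
  · -- the neighbourhood is contained in the target set
    rintro y ⟨hy1, hy2⟩
    obtain ⟨x, hx, hφx⟩ := intermediate_value_Ioo (by linarith : x₀ - δ/2 ≤ x₀ + δ/2)
      hφc.continuousOn hy1
    have hxδ : |x - x₀| < δ := by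
      rw [abs_lt]
      exact ⟨by linarith [hx.1], by linarith [hx.2]⟩
    refine ⟨x, (hmem x hxδ).1, hφx, ?_⟩
    have h2 := (hmem x hxδ).2
    have hy2' : ψ x₀ + ε < ψ y := hy2
    linarith
  · constructor
    · rw [mem_preimage, ← hφeq]; exact ⟨hum, hup⟩
    · rw [mem_preimage, mem_Ioi, hε]; linarith

/-- The fundamental phase-plane comparison ("no crossing") lemma: two disjoint ascending
arcs, each going from a point on the vertical axis (approached along the edge filter) to a
point on the horizontal axis, must be strictly ordered: if the first enters lower, it ends lower. -/
lemma crossing {φ ψ : ℝ → ℝ} (hd : ∀ x, HasDerivAt φ (ψ x) x) (hψc : Continuous ψ)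
    (hinj : Function.Injective fun x => (φ x, ψ x))
    {S₁ S₂ : Set ℝ} {l₁ l₂ : Filter ℝ} {b₁ b₂ w₁ w₂ : ℝ}
    (P₁ : EntryPkg φ ψ S₁ l₁ b₁ w₁) (P₂ : EntryPkg φ ψ S₂ l₂ b₂ w₂)
    (hdisj : ∀ x, x ∈ S₁ → x ∈ S₂ → False) (hbne : b₁ ≠ b₂) (hw : w₁ < w₂) :
    φ b₁ < φ b₂ := by
  have hφc : Continuous φ := cont_of_hasDerivAt hd
  have hne₁ : l₁.NeBot := P₁.nebot
  have hne₂ : l₂.NeBot := P₂.nebot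
  -- monotonicity of φ on S₁
  have mono₁ : ∀ x ∈ S₁, ∀ y ∈ S₁, x < y → φ x < φ y := by
    intro x hx y hy hxy
    refine mono_pair hd hxy fun z hz => ?_
    exact (P₁.pos z (P₁.seg x hx ⟨hz.1, lt_trans hz.2 (P₁.ltb y hy)⟩)).2.2
  have inj₁ : ∀ x ∈ S₁, ∀ y ∈ S₁, φ x = φ y → x = y := by
    intro x hx y hy hxy
    rcases lt_trichotomy x y with h | h | h
    · exact absurd hxy (ne_of_lt (mono₁ x hx y hy h))
    · exact h
    · exact absurd hxy.symm (ne_of_lt (mono₁ y hy x hx h))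
  have range₁ : ∀ u : ℝ, 0 < u → u < φ b₁ → ∃ x ∈ S₁, φ x = u := by
    intro u hu hub
    have hev : ∀ᶠ x in l₁, φ x < u ∧ x ∈ S₁ :=
      (P₁.tendφ.eventually_lt_const hu).and P₁.mem
    obtain ⟨xlo, hxlo1, hxlo2⟩ := hev.exists
    obtain ⟨x, hx, hφx⟩ := intermediate_value_Ioo (le_of_lt (P₁.ltb xlo hxlo2))
      hφc.continuousOn ⟨hxlo1, hub⟩
    exact ⟨x, P₁.seg xlo hxlo2 hx, hφx⟩
  by_contra hcon
  push_neg at hcon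
  rcases eq_or_lt_of_le hcon with heq | hlt
  · -- equal heights: the two endpoints coincide in the phase plane
    apply hbne
    apply hinj
    have : ψ b₁ = ψ b₂ := by rw [P₁.ψb, P₂.ψb]
    simp only [Prod.mk.injEq]
    exact ⟨heq.symm, this⟩
  · -- φ b₂ < φ b₁ : derive a contradiction
    obtain ⟨y₀', hy₀'⟩ := P₂.mem.exists
    have h2pos : 0 < φ b₂ := lt_trans (P₂.pos y₀' hy₀').1 (P₂.pos y₀' hy₀').2.1
    set U : Set ℝ := {y | ∃ x ∈ S₁, φ x = φ y ∧ ψ x < ψ y} with hU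
    set V : Set ℝ := {y | ∃ x ∈ S₁, φ x = φ y ∧ ψ y < ψ x} with hV
    have hUopen : IsOpen U := cross_open hφc hψc P₁.opn mono₁
    have hVopen : IsOpen V := by
      have hop := cross_open (ψ := fun x => -ψ x) hφc (hψc.neg) P₁.opn mono₁
      have heqset : V = {y | ∃ x ∈ S₁, φ x = φ y ∧ (fun x => -ψ x) x < (fun x => -ψ x) y} := by
        ext y
        simp only [hV, mem_setOf_eq]
        constructor
        · rintro ⟨x, hx, h1, h2⟩; exact ⟨x, hx, h1, by simpa using h2⟩
        · rintro ⟨x, hx, h1, h2⟩; exact ⟨x, hx, h1, by simpa using h2⟩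
      rw [heqset]; exact hop
    have hcover : ∀ y ∈ S₂, y ∈ U ∨ y ∈ V := by
      intro y hy
      obtain ⟨x, hx, hφx⟩ := range₁ (φ y) (P₂.pos y hy).1
        (lt_trans (P₂.pos y hy).2.1 hlt)
      rcases lt_trichotomy (ψ x) (ψ y) with h | h | h
      · exact Or.inl ⟨x, hx, hφx, h⟩
      · exfalso
        have : x = y := hinj (by simp only [Prod.mk.injEq]; exact ⟨hφx, h⟩)
        exact hdisj x hx (this ▸ hy)
      · exact Or.inr ⟨x, hx, hφx, h⟩
    -- U meets S₂ (near the entry edge of S₂)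
    have hUne : (S₂ ∩ U).Nonempty := by
      set ε := (w₂ - w₁) / 3 with hε
      have hεpos : 0 < ε := by rw [hε]; linarith
      obtain ⟨x₁, hx₁S, hx₁⟩ := P₁.base (fun x => ψ x < w₁ + ε)
        (P₁.tendψ.eventually_lt_const (by linarith))
      obtain ⟨x₁', hx₁'lt, hx₁'S⟩ := ((P₁.small x₁ hx₁S).and P₁.mem).exists
      have hη : 0 < φ x₁' := (P₁.pos x₁' hx₁'S).1
      have hev : ∀ᶠ y in l₂, y ∈ S₂ ∧ φ y < φ x₁' ∧ w₂ - ε < ψ y := by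
        filter_upwards [P₂.mem, P₂.tendφ.eventually_lt_const hη,
          P₂.tendψ.eventually_const_lt (by linarith : w₂ - ε < w₂)] with y h1 h2 h3
        exact ⟨h1, h2, h3⟩
      obtain ⟨y, hyS, hyφ, hyψ⟩ := hev.exists
      obtain ⟨x, hxS, hφx⟩ := range₁ (φ y) (P₂.pos y hyS).1
        (lt_trans (P₂.pos y hyS).2.1 hlt)
      have hxlt : x < x₁' := by
        by_contra hge
        push_neg at hge
        rcases eq_or_lt_of_le hge with h | h
        · rw [h, hφx] at hyφ; exact lt_irrefl _ hyφ
        · have := mono₁ x₁' hx₁'S x hxS h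
          rw [hφx] at this; linarith
      have hψx : ψ x < w₁ + ε := hx₁ x hxS (lt_trans hxlt hx₁'lt)
      refine ⟨y, hyS, x, hxS, hφx, ?_⟩
      have : w₁ + ε < w₂ - ε := by rw [hε]; linarith
      linarith
    -- V meets S₂ (near b₂)
    have hVne : (S₂ ∩ V).Nonempty := by
      obtain ⟨xbar, hxbarS, hφxbar⟩ := range₁ (φ b₂) h2pos hlt
      set c := ψ xbar with hc
      have hcpos : 0 < c := (P₁.pos xbar hxbarS).2.2
      have hev : ∀ᶠ z in 𝓝 xbar, z ∈ S₁ ∧ c / 2 < ψ z := by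
        filter_upwards [P₁.opn.mem_nhds hxbarS,
          (hψc.tendsto xbar).eventually_const_lt (by linarith : c / 2 < c)] with z h1 h2
        exact ⟨h1, h2⟩
      obtain ⟨δ, hδpos, hδ⟩ := Metric.eventually_nhds_iff.1 hev
      have hmem : ∀ z : ℝ, |z - xbar| < δ → z ∈ S₁ ∧ c / 2 < ψ z := by
        intro z hz; exact hδ (by rwa [Real.dist_eq])
      have hxm : (xbar - δ/2) ∈ S₁ := by
        refine (hmem (xbar - δ/2) ?_).1
        rw [show xbar - δ/2 - xbar = -(δ/2) by ring, abs_neg, abs_of_nonneg (by linarith)]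
        linarith
      have hu₀ : φ (xbar - δ/2) < φ b₂ := by
        rw [← hφxbar]; exact mono₁ _ hxm _ hxbarS (by linarith)
      -- approach b₂ from the left within S₂
      have hS₂ev : Ioo y₀' b₂ ∈ 𝓝[<] b₂ := Ioo_mem_nhdsLT_of_mem
        ⟨P₂.ltb y₀' hy₀', le_refl _⟩
      have htφ : Tendsto φ (𝓝[<] b₂) (𝓝 (φ b₂)) :=
        (hφc.tendsto b₂).mono_left nhdsWithin_le_nhds
      have htψ : Tendsto ψ (𝓝[<] b₂) (𝓝 0) := by
        have := (hψc.tendsto b₂).mono_left (nhdsWithin_le_nhds (s := Iio b₂))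
        rwa [P₂.ψb] at this
      have hev2 : ∀ᶠ y in 𝓝[<] b₂, y ∈ S₂ ∧ φ (xbar - δ/2) < φ y ∧ ψ y < c / 2 := by
        filter_upwards [hS₂ev, htφ.eventually_const_lt hu₀,
          htψ.eventually_lt_const (by linarith : (0:ℝ) < c / 2)] with y h1 h2 h3
        exact ⟨P₂.seg y₀' hy₀' h1, h2, h3⟩
      obtain ⟨y, hyS, hyφ, hyψ⟩ := hev2.exists
      obtain ⟨x, hxS, hφx⟩ := range₁ (φ y) (P₂.pos y hyS).1
        (lt_trans (P₂.pos y hyS).2.1 hlt)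
      have hx1 : xbar - δ/2 < x := by
        by_contra hge
        push_neg at hge
        rcases eq_or_lt_of_le hge with h | h
        · rw [← h, hφx] at hyφ; exact lt_irrefl _ hyφ
        · have := mono₁ x hxS _ hxm h
          rw [hφx] at this; linarith
      have hx2 : x < xbar := by
        by_contra hge
        push_neg at hge
        rcases eq_or_lt_of_le hge with h | h
        · rw [h, hφx] at hφxbar
          have := (P₂.pos y hyS).2.1
          linarith
        · have := mono₁ xbar hxbarS x hxS h
          rw [hφx, hφxbar] at this
          have := (P₂.pos y hyS).2.1
          linarith
      have hxδ : |x - xbar| < δ := by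
        rw [abs_lt]; exact ⟨by linarith, by linarith⟩
      have hψx : c / 2 < ψ x := (hmem x hxδ).2
      exact ⟨y, hyS, x, hxS, hφx, by linarith⟩
    -- contradiction with preconnectedness of S₂
    obtain ⟨y, hyS₂, hyU, hyV⟩ := P₂.pre U V hUopen hVopen
      (fun y hy => hcover y hy) hUne hVne
    obtain ⟨x, hxS, hφx, hψx⟩ := hyU
    obtain ⟨x', hx'S, hφx', hψx'⟩ := hyV
    have : x = x' := inj₁ x hxS x' hx'S (by rw [hφx, hφx'])
    rw [this] at hψx
    linarith

/-! ### The bundle of static hypotheses on a time slice -/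

structure Nice (φ ψ χ : ℝ → ℝ) : Prop where
  hd1 : ∀ x, HasDerivAt φ (ψ x) x
  hd2 : ∀ x, HasDerivAt ψ (χ x) x
  cfin : {x | ψ x = 0}.Finite
  simp1 : ∀ x, φ x = 0 → ψ x ≠ 0
  simp2 : ∀ x, ψ x = 0 → χ x ≠ 0
  limφb : Tendsto φ atBot (𝓝 0)
  limφt : Tendsto φ atTop (𝓝 0)
  limψb : Tendsto ψ atBot (𝓝 0)
  limψt : Tendsto ψ atTop (𝓝 0)
  inj : Function.Injective fun x => (φ x, ψ x)
  minc : ∀ x, IsLocalMin φ x → φ x ≤ 0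
  maxc : ∀ x, IsLocalMax φ x → 0 ≤ φ x

lemma Nice.contφ {φ ψ χ : ℝ → ℝ} (N : Nice φ ψ χ) : Continuous φ :=
  cont_of_hasDerivAt N.hd1

lemma Nice.contψ {φ ψ χ : ℝ → ℝ} (N : Nice φ ψ χ) : Continuous ψ :=
  cont_of_hasDerivAt N.hd2

lemma Nice.neg {φ ψ χ : ℝ → ℝ} (N : Nice φ ψ χ) :
    Nice (fun x => -φ x) (fun x => -ψ x) (fun x => -χ x) where
  hd1 x := (N.hd1 x).neg
  hd2 x := (N.hd2 x).neg
  cfin := by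
    have : {x | -ψ x = 0} = {x | ψ x = 0} := by ext x; simp
    rw [this]; exact N.cfin
  simp1 x h := by
    have h' : φ x = 0 := by simpa using h
    have := N.simp1 x h'
    simpa using this
  simp2 x h := by
    have h' : ψ x = 0 := by simpa using h
    have := N.simp2 x h'
    simpa using this
  limφb := by simpa using N.limφb.neg
  limφt := by simpa using N.limφt.neg
  limψb := by simpa using N.limψb.neg
  limψt := by simpa using N.limψt.neg
  inj x y h := by
    simp only [Prod.mk.injEq, neg_inj] at h
    exact N.inj (by simp only [Prod.mk.injEq]; exact h)
  minc x h := by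
    have : IsLocalMax φ x := by simpa using h.neg
    simpa using N.maxc x this
  maxc x h := by
    have : IsLocalMin φ x := by simpa using h.neg
    simpa using N.minc x this

lemma hd_reflect {φ ψ : ℝ → ℝ} (hd : ∀ x, HasDerivAt φ (ψ x) x) :
    ∀ x, HasDerivAt (fun y => φ (-y)) (-ψ (-x)) x := by
  intro x
  have h := HasDerivAt.comp x (hd (-x)) (hasDerivAt_neg x)
  simpa [Function.comp_def, mul_comm] using h

lemma Nice.reflect {φ ψ χ : ℝ → ℝ} (N : Nice φ ψ χ) :
    Nice (fun x => φ (-x)) (fun x => -ψ (-x)) (fun x => χ (-x)) where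
  hd1 x := hd_reflect N.hd1 x
  hd2 x := by
    have h := (hd_reflect N.hd2 x).neg
    simpa only [neg_neg, Pi.neg_def] using h
  cfin := by
    have : {x | -ψ (-x) = 0} = Neg.neg ⁻¹' {x | ψ x = 0} := by
      ext x; simp
    rw [this]
    exact N.cfin.preimage (neg_injective.injOn)
  simp1 x h := by
    have h' : φ (-x) = 0 := by simpa using h
    have := N.simp1 (-x) h'
    simpa using this
  simp2 x h := by
    have h' : ψ (-x) = 0 := by simpa using h
    have := N.simp2 (-x) h'
    simpa using this
  limφb := N.limφt.comp tendsto_neg_atBot_atTop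
  limφt := N.limφb.comp tendsto_neg_atTop_atBot
  limψb := by
    have h := (N.limψt.comp tendsto_neg_atBot_atTop).neg
    simp only [Function.comp_def, neg_zero] at h
    exact h
  limψt := by
    have h := (N.limψb.comp tendsto_neg_atTop_atBot).neg
    simp only [Function.comp_def, neg_zero] at h
    exact h
  inj x y h := by
    simp only [Prod.mk.injEq, neg_inj] at h
    have := N.inj (a₁ := -x) (a₂ := -y) (by simp only [Prod.mk.injEq]; exact h)
    exact neg_injective this
  minc x h := by
    have ht : Tendsto (fun z : ℝ => -z) (𝓝 (-x)) (𝓝 x) := by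
      simpa using (continuous_neg.tendsto (-x))
    have h' := ht.eventually h
    have : IsLocalMin φ (-x) := by
      filter_upwards [h'] with z hz
      simpa using hz
    exact N.minc (-x) this
  maxc x h := by
    have ht : Tendsto (fun z : ℝ => -z) (𝓝 (-x)) (𝓝 x) := by
      simpa using (continuous_neg.tendsto (-x))
    have h' := ht.eventually h
    have : IsLocalMax φ (-x) := by
      filter_upwards [h'] with z hz
      simpa using hz
    exact N.maxc (-x) this

/-! ### Classification of critical points and uniqueness within a sign interval -/

lemma crit_isLocalMax {φ ψ χ : ℝ → ℝ} (hd1 : ∀ x, HasDerivAt φ (ψ x) x)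
    (hd2 : ∀ x, HasDerivAt ψ (χ x) x) {c : ℝ} (hc : ψ c = 0) (hχ : χ c < 0) :
    IsLocalMax φ c := by
  obtain ⟨u, hu, huIoo⟩ := mem_nhdsLT_iff_exists_Ioo_subset.1
    ((ev_pos_left (hd2 c) hc (by linarith)).filter_mono (le_refl _))
  obtain ⟨v, hv, hvIoo⟩ := mem_nhdsGT_iff_exists_Ioo_subset.1
    (ev_neg_right (hd2 c) hc hχ)
  have huc : u < c := hu
  have hcv : c < v := hv
  have : Ioo u v ∈ 𝓝 c := Ioo_mem_nhds huc hcv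
  filter_upwards [this] with y hy
  rcases lt_trichotomy y c with h | h | h
  · exact le_of_lt (mono_pair hd1 h fun z hz => huIoo ⟨lt_trans hy.1 hz.1, hz.2⟩)
  · rw [h]
  · exact le_of_lt (anti_pair hd1 h fun z hz => hvIoo ⟨hz.1, lt_trans hz.2 hy.2⟩)

lemma crit_isLocalMin {φ ψ χ : ℝ → ℝ} (hd1 : ∀ x, HasDerivAt φ (ψ x) x)
    (hd2 : ∀ x, HasDerivAt ψ (χ x) x) {c : ℝ} (hc : ψ c = 0) (hχ : 0 < χ c) :
    IsLocalMin φ c := by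
  have := crit_isLocalMax (φ := fun x => -φ x) (ψ := fun x => -ψ x) (χ := fun x => -χ x)
    (c := c) (fun x => (hd1 x).neg) (fun x => (hd2 x).neg) (by simp [hc]) (by simpa using hχ)
  have h2 : IsLocalMin (fun x => - -φ x) c := this.neg
  simpa using h2

/-- In a region where `φ > 0`, all critical points are local maxima. -/
lemma crit_max_of_pos {φ ψ χ : ℝ → ℝ} (N : Nice φ ψ χ) {s : Set ℝ}
    (hpos : ∀ x ∈ s, 0 < φ x) {c : ℝ} (hc : c ∈ s) (hψc : ψ c = 0) :
    IsLocalMax φ c := by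
  rcases lt_trichotomy (χ c) 0 with h | h | h
  · exact crit_isLocalMax N.hd1 N.hd2 hψc h
  · exact absurd h (N.simp2 c hψc)
  · exact absurd (N.minc c (crit_isLocalMin N.hd1 N.hd2 hψc h)) (not_le.2 (hpos c hc))

/-- Uniqueness of the critical point in a sign interval. -/
lemma crit_unique {φ ψ χ : ℝ → ℝ} (N : Nice φ ψ χ) {s : Set ℝ} (hs : s.OrdConnected)
    (hpos : ∀ x ∈ s, 0 < φ x) :
    ∀ c ∈ s, ∀ c' ∈ s, ψ c = 0 → ψ c' = 0 → c = c' := by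
  have key : ∀ c ∈ s, ∀ c' ∈ s, ψ c = 0 → ψ c' = 0 → c < c' → False := by
    intro c hc c' hc' hψc hψc' hlt
    set T : Set ℝ := {x | ψ x = 0} ∩ Ioc c c' with hT
    have hTfin : T.Finite := N.cfin.subset (inter_subset_left)
    have hTne : T.Nonempty := ⟨c', hψc', hlt, le_refl _⟩
    obtain ⟨c₂, hc₂T, hc₂min⟩ := (by obtain ⟨a, ha, h⟩ := T.exists_min_image id hTfin hTne; exact ⟨a, ha, fun a' ha' hle => le_antisymm (h a' ha') hle⟩ : ∃ a ∈ T, ∀ a' ∈ T, id a' ≤ id a → id a = id a')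
    have hc₂mem : c₂ ∈ Ioc c c' := hc₂T.2
    have hc₂s : c₂ ∈ s := hs.out hc hc' ⟨le_of_lt hc₂mem.1, hc₂mem.2⟩
    have hnocrit : ∀ x ∈ Ioo c c₂, ψ x ≠ 0 := by
      intro x hx hψx
      have hxT : x ∈ T := ⟨hψx, hx.1, le_trans (le_of_lt hx.2) hc₂mem.2⟩
      have := hc₂min x hxT (le_of_lt hx.2)
      simp only [id] at this
      exact absurd (this ▸ hx.2) (lt_irrefl _)
    have hmaxc : IsLocalMax φ c := crit_max_of_pos N hpos hc hψc
    have hmaxc₂ : IsLocalMax φ c₂ := crit_max_of_pos N hpos hc₂s hc₂T.1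
    rcases sign_dichotomy N.contψ (ordConnected_Ioo) hnocrit with hp | hn
    · -- ψ > 0 just right of c contradicts c being a local max
      have hev : ∀ᶠ y in 𝓝[>] c, φ y ≤ φ c :=
        (hmaxc.filter_mono nhdsWithin_le_nhds)
      have hmem : Ioo c c₂ ∈ 𝓝[>] c := Ioo_mem_nhdsGT_of_mem ⟨le_refl _, hc₂mem.1⟩
      obtain ⟨y, hy1, hy2⟩ := (hev.and hmem).exists
      have : φ c < φ y := mono_pair N.hd1 hy2.1 fun z hz => hp z ⟨hz.1, lt_trans hz.2 hy2.2⟩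
      linarith
    · -- ψ < 0 just left of c₂ contradicts c₂ being a local max
      have hev : ∀ᶠ y in 𝓝[<] c₂, φ y ≤ φ c₂ :=
        (hmaxc₂.filter_mono nhdsWithin_le_nhds)
      have hmem : Ioo c c₂ ∈ 𝓝[<] c₂ := Ioo_mem_nhdsLT_of_mem ⟨hc₂mem.1, le_refl _⟩
      obtain ⟨y, hy1, hy2⟩ := (hev.and hmem).exists
      have : φ c₂ < φ y := anti_pair N.hd1 hy2.2 fun z hz => hn z ⟨lt_trans hy2.1 hz.1, hz.2⟩
      linarith
  intro c hc c' hc' hψc hψc'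
  rcases lt_trichotomy c c' with h | h | h
  · exact absurd (key c hc c' hc' hψc hψc' h) not_false
  · exact h
  · exact absurd (key c' hc' c hc hψc' hψc h) not_false

/-! ### Builders for entry packages -/

lemma buildPkg_Ioo {φ ψ : ℝ → ℝ} (hφcont : Continuous φ) (hψcont : Continuous ψ)
    (hd : ∀ x, HasDerivAt φ (ψ x) x) {a c : ℝ} (hac : a < c)
    (hpos : ∀ x ∈ Ioo a c, 0 < φ x) (hψpos : ∀ x ∈ Ioo a c, 0 < ψ x)
    (hψc : ψ c = 0) (hφa : φ a = 0) :
    EntryPkg φ ψ (Ioo a c) (𝓝[>] a) c (ψ a) where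
  opn := isOpen_Ioo
  pre := isPreconnected_Ioo
  pos x hx := ⟨hpos x hx, mono_pair hd hx.2 (fun z hz => hψpos z ⟨lt_trans hx.1 hz.1, hz.2⟩),
    hψpos x hx⟩
  ltb x hx := hx.2
  seg x hx := fun y hy => ⟨lt_trans hx.1 hy.1, hy.2⟩
  ψb := hψc
  nebot := by infer_instance
  mem := by
    filter_upwards [Ioo_mem_nhdsGT_of_mem (show a ∈ Ico a c from ⟨le_refl _, hac⟩)] with x hx
    exact hx
  small := fun x₀ hx₀ => by
    filter_upwards [Ioo_mem_nhdsGT_of_mem (show a ∈ Ico a x₀ from ⟨le_refl _, hx₀.1⟩)] with x hx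
    exact hx.2
  base := fun P hP => by
    obtain ⟨u, hu, huP⟩ := mem_nhdsGT_iff_exists_Ioo_subset.1 hP
    refine ⟨(a + min u c) / 2, ⟨?_, ?_⟩, ?_⟩
    · have : a < min u c := lt_min hu hac
      linarith
    · have h1 : a < min u c := lt_min hu hac
      have h2 : min u c ≤ c := min_le_right _ _
      linarith
    · intro x hx hlt
      apply huP
      have h1 : a < min u c := lt_min hu hac
      have h2 : min u c ≤ u := min_le_left _ _
      exact ⟨hx.1, by linarith⟩
  tendφ := by
    have := (hφcont.tendsto a).mono_left (nhdsWithin_le_nhds (s := Ioi a))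
    rwa [hφa] at this
  tendψ := (hψcont.tendsto a).mono_left (nhdsWithin_le_nhds (s := Ioi a))

lemma buildPkg_Iio {φ ψ : ℝ → ℝ} (hφcont : Continuous φ) (hψcont : Continuous ψ)
    (hd : ∀ x, HasDerivAt φ (ψ x) x) {c : ℝ}
    (hpos : ∀ x ∈ Iio c, 0 < φ x) (hψpos : ∀ x ∈ Iio c, 0 < ψ x)
    (hψc : ψ c = 0) (hφlim : Tendsto φ atBot (𝓝 0)) (hψlim : Tendsto ψ atBot (𝓝 0)) :
    EntryPkg φ ψ (Iio c) atBot c 0 where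
  opn := isOpen_Iio
  pre := isPreconnected_Iio
  pos x hx := ⟨hpos x hx, mono_pair hd hx (fun z hz => hψpos z hz.2), hψpos x hx⟩
  ltb x hx := hx
  seg x hx := fun y hy => hy.2
  ψb := hψc
  nebot := by infer_instance
  mem := eventually_lt_atBot c
  small := fun x₀ _ => eventually_lt_atBot x₀
  base := fun P hP => by
    obtain ⟨X, hX⟩ := eventually_atBot.1 hP
    refine ⟨min X c - 1, by
      have := min_le_right X c
      simp only [mem_Iio]
      linarith, ?_⟩
    · intro x hx hlt
      apply hX
      have := min_le_left X c
      linarith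
  tendφ := hφlim
  tendψ := hψlim

/-! ### Hump lemmas: structure of a positive sign interval -/

/-- Interior positive interval between two consecutive zeros. -/
lemma humpI {φ ψ χ : ℝ → ℝ} (N : Nice φ ψ χ) {a b : ℝ} (hab : a < b)
    (ha : φ a = 0) (hb : φ b = 0)
    (hpos : ∀ x ∈ Ioo a b, 0 < φ x) :
    ∃ c ∈ Ioo a b, ψ c = 0 ∧ 0 < ψ a ∧ ψ b < 0 ∧
      EntryPkg φ ψ (Ioo a c) (𝓝[>] a) c (ψ a) ∧
      EntryPkg (fun x => φ (-x)) (fun x => -ψ (-x)) (Ioo (-b) (-c)) (𝓝[>] (-b)) (-c) (-ψ b) := by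
  -- sign of ψ at the endpoints
  have hψa : 0 < ψ a := by
    rcases (N.simp1 a ha).lt_or_gt with h | h
    · exfalso
      obtain ⟨y, hy1, hy2⟩ := ((ev_neg_right (N.hd1 a) ha h).and
        (Ioo_mem_nhdsGT_of_mem (show a ∈ Ico a b from ⟨le_refl _, hab⟩))).exists
      exact absurd (hpos y hy2) (not_lt.2 (le_of_lt hy1))
    · exact h
  have hψb : ψ b < 0 := by
    rcases (N.simp1 b hb).lt_or_gt with h | h
    · exact h
    · exfalso
      obtain ⟨y, hy1, hy2⟩ := ((ev_neg_left (N.hd1 b) hb h).and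
        (Ioo_mem_nhdsLT_of_mem (show b ∈ Ioc a b from ⟨hab, le_refl _⟩))).exists
      exact absurd (hpos y hy2) (not_lt.2 (le_of_lt hy1))
  -- critical point by Rolle
  obtain ⟨c, hcIoo, hc0⟩ := exists_deriv_eq_zero hab (N.contφ.continuousOn) (ha.trans hb.symm)
  have hψc : ψ c = 0 := by rw [← (N.hd1 c).deriv]; exact hc0
  have huniq := crit_unique N (ordConnected_Ioo (a := a) (b := b)) hpos
  -- sign of ψ on the two sub-arcs
  have hψpos : ∀ x ∈ Ioo a c, 0 < ψ x := by
    have hnz : ∀ x ∈ Ioo a c, ψ x ≠ 0 := by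
      intro x hx hψx
      have := huniq x ⟨hx.1, lt_trans hx.2 hcIoo.2⟩ c hcIoo hψx hψc
      exact absurd (this ▸ hx.2) (lt_irrefl _)
    rcases sign_dichotomy N.contψ ordConnected_Ioo hnz with h | h
    · exact h
    · exfalso
      have : φ c < φ a := anti_pair N.hd1 hcIoo.1 h
      rw [ha] at this
      exact absurd (hpos c hcIoo) (not_lt.2 (le_of_lt this))
  have hψneg : ∀ x ∈ Ioo c b, ψ x < 0 := by
    have hnz : ∀ x ∈ Ioo c b, ψ x ≠ 0 := by
      intro x hx hψx
      have := huniq x ⟨lt_trans hcIoo.1 hx.1, hx.2⟩ c hcIoo hψx hψc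
      exact absurd (this ▸ hx.1) (lt_irrefl _)
    rcases sign_dichotomy N.contψ ordConnected_Ioo hnz with h | h
    · exfalso
      have : φ c < φ b := mono_pair N.hd1 hcIoo.2 h
      rw [hb] at this
      exact absurd (hpos c hcIoo) (not_lt.2 (le_of_lt this))
    · exact h
  refine ⟨c, hcIoo, hψc, hψa, hψb, ?_, ?_⟩
  · exact buildPkg_Ioo N.contφ N.contψ N.hd1 hcIoo.1
      (fun x hx => hpos x ⟨hx.1, lt_trans hx.2 hcIoo.2⟩) hψpos hψc ha
  · -- the reflected exit arc
    have hpkg := buildPkg_Ioo (φ := fun x => φ (-x)) (ψ := fun x => -ψ (-x))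
      (N.contφ.comp continuous_neg) ((N.contψ.comp continuous_neg).neg)
      (hd_reflect N.hd1) (a := -b) (c := -c) (by linarith [hcIoo.2])
      (fun x hx => by
        have : -x ∈ Ioo c b := ⟨by linarith [hx.2], by linarith [hx.1]⟩
        exact hpos (-x) ⟨lt_trans hcIoo.1 this.1, this.2⟩)
      (fun x hx => by
        have : -x ∈ Ioo c b := ⟨by linarith [hx.2], by linarith [hx.1]⟩
        simpa using (hψneg (-x) this))
      (by simpa using hψc) (by simpa using hb)
    have hw : (fun x => -ψ (-x)) (-b) = -ψ b := by simp
    rwa [neg_neg] at hpkg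

/-- Left tail interval (positive). -/
lemma humpL {φ ψ χ : ℝ → ℝ} (N : Nice φ ψ χ) {b : ℝ} (hb : φ b = 0)
    (hpos : ∀ x, x < b → 0 < φ x) :
    ∃ c < b, ψ c = 0 ∧ ψ b < 0 ∧
      EntryPkg φ ψ (Iio c) atBot c 0 ∧
      EntryPkg (fun x => φ (-x)) (fun x => -ψ (-x)) (Ioo (-b) (-c)) (𝓝[>] (-b)) (-c) (-ψ b) := by
  have hψb : ψ b < 0 := by
    rcases (N.simp1 b hb).lt_or_gt with h | h
    · exact h
    · exfalso
      obtain ⟨y, hy1, hy2⟩ := ((ev_neg_left (N.hd1 b) hb h).and self_mem_nhdsWithin).exists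
      exact absurd (hpos y hy2) (not_lt.2 (le_of_lt hy1))
  -- existence of the critical point
  set v := φ (b - 1) with hv
  have hvpos : 0 < v := hpos _ (by linarith)
  obtain ⟨X, hX⟩ := eventually_atBot.1 (N.limφb.eventually_lt_const (by linarith : (0:ℝ) < v/2))
  set Y := min X (b - 1) - 1 with hY
  have hYX : Y ≤ X := by have := min_le_left X (b-1); linarith
  have hYb1 : Y < b - 1 := by have := min_le_right X (b-1); linarith
  have hYb : Y < b := by linarith
  obtain ⟨c, hcmem, hcmax⟩ := (isCompact_Icc (a := Y) (b := b)).exists_isMaxOn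
    (nonempty_Icc.2 (le_of_lt hYb)) (N.contφ.continuousOn)
  have hcv : v ≤ φ c := hcmax (by constructor <;> [linarith; linarith] : (b-1) ∈ Icc Y b)
  have hcY : Y < c := by
    rcases eq_or_lt_of_le hcmem.1 with h | h
    · exfalso; have := hX Y hYX; rw [h] at this; linarith
    · exact h
  have hcb : c < b := by
    rcases eq_or_lt_of_le hcmem.2 with h | h
    · exfalso; rw [h] at hcv; rw [hb] at hcv; linarith
    · exact h
  have hlocmax : IsLocalMax φ c := hcmax.isLocalMax (Icc_mem_nhds hcY hcb)
  have hψc : ψ c = 0 := hlocmax.hasDerivAt_eq_zero (N.hd1 c)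
  have huniq := crit_unique N (ordConnected_Iio (a := b)) (fun x hx => hpos x hx)
  have hφcpos : 0 < φ c := hpos c hcb
  -- ψ > 0 on Iio c
  have hψpos : ∀ x ∈ Iio c, 0 < ψ x := by
    have hnz : ∀ x ∈ Iio c, ψ x ≠ 0 := by
      intro x hx hψx
      have := huniq x (lt_trans hx hcb) c hcb hψx hψc
      rw [this] at hx
      simp at hx
    rcases sign_dichotomy N.contψ ordConnected_Iio hnz with h | h
    · exact h
    · exfalso
      have hge : ∀ᶠ x in atBot, φ c ≤ φ x := by
        filter_upwards [eventually_le_atBot (c - 1)] with x hx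
        exact le_of_lt (anti_pair N.hd1 (by linarith : x < c) (fun z hz => h z hz.2))
      have := ge_of_tendsto N.limφb hge
      linarith
  -- ψ < 0 on Ioo c b
  have hψneg : ∀ x ∈ Ioo c b, ψ x < 0 := by
    have hnz : ∀ x ∈ Ioo c b, ψ x ≠ 0 := by
      intro x hx hψx
      have := huniq x (hx.2) c hcb hψx hψc
      exact absurd (this ▸ hx.1) (lt_irrefl _)
    rcases sign_dichotomy N.contψ ordConnected_Ioo hnz with h | h
    · exfalso
      have : φ c < φ b := mono_pair N.hd1 hcb h
      rw [hb] at this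
      linarith
    · exact h
  refine ⟨c, hcb, hψc, hψb, ?_, ?_⟩
  · exact buildPkg_Iio N.contφ N.contψ N.hd1 (fun x hx => hpos x (lt_trans hx hcb))
      hψpos hψc N.limφb N.limψb
  · have hpkg := buildPkg_Ioo (φ := fun x => φ (-x)) (ψ := fun x => -ψ (-x))
      (N.contφ.comp continuous_neg) ((N.contψ.comp continuous_neg).neg)
      (hd_reflect N.hd1) (a := -b) (c := -c) (by linarith)
      (fun x hx => hpos (-x) (by linarith [hx.1]))
      (fun x hx => by
        have : -x ∈ Ioo c b := ⟨by linarith [hx.2], by linarith [hx.1]⟩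
        simpa using (hψneg (-x) this))
      (by simpa using hψc) (by simpa using hb)
    have hw : (fun x => -ψ (-x)) (-b) = -ψ b := by simp
    rwa [neg_neg] at hpkg

/-- Right tail interval (positive); obtained from `humpL` by reflection. -/
lemma humpR {φ ψ χ : ℝ → ℝ} (N : Nice φ ψ χ) {a : ℝ} (ha : φ a = 0)
    (hpos : ∀ x, a < x → 0 < φ x) :
    ∃ c, a < c ∧ ψ c = 0 ∧ 0 < ψ a ∧
      EntryPkg φ ψ (Ioo a c) (𝓝[>] a) c (ψ a) ∧
      EntryPkg (fun x => φ (-x)) (fun x => -ψ (-x)) (Iio (-c)) atBot (-c) 0 := by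
  obtain ⟨ct, hct, hψct, hψrb, pkg1, pkg2⟩ := humpL N.reflect (b := -a)
    (by simpa using ha) (fun x hx => hpos (-x) (by linarith))
  refine ⟨-ct, by linarith, by simpa using hψct, by simpa using hψrb, ?_, ?_⟩
  · -- un-reflect the exit package of the reflected left tail
    simp only [neg_neg] at pkg2
    exact pkg2
  · simpa using pkg1

/-! ### Index intervals between consecutive zeros -/

def idxI (z : ℕ → ℝ) (k i : ℕ) : Set ℝ :=
  if i = 0 then Iio (z 0) else if i < k then Ioo (z (i-1)) (z i) else Ioi (z (k-1))

lemma idxI_ordConnected (z : ℕ → ℝ) (k i : ℕ) : (idxI z k i).OrdConnected := by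
  unfold idxI
  split_ifs
  · exact ordConnected_Iio
  · exact ordConnected_Ioo
  · exact ordConnected_Ioi

lemma idxI_no_zero {φ : ℝ → ℝ} {k : ℕ} {z : ℕ → ℝ}
    (hzm : ∀ i j, i < j → j < k → z i < z j)
    (hzall : ∀ x, φ x = 0 → ∃ j, j < k ∧ z j = x)
    (hk : 1 ≤ k) {i : ℕ} (hik : i ≤ k) : ∀ x ∈ idxI z k i, φ x ≠ 0 := by
  intro x hx hφx
  obtain ⟨j, hj, hzj⟩ := hzall x hφx
  subst hzj
  unfold idxI at hx
  by_cases hi0 : i = 0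
  · rw [if_pos hi0] at hx
    simp only [mem_Iio] at hx
    rcases Nat.eq_zero_or_pos j with h | h
    · subst h; exact absurd hx (lt_irrefl _)
    · exact absurd (lt_trans (hzm 0 j h hj) hx) (lt_irrefl _)
  · rw [if_neg hi0] at hx
    by_cases hik' : i < k
    · rw [if_pos hik'] at hx
      obtain ⟨hx1, hx2⟩ := hx
      rcases lt_or_ge j i with h | h
      · -- j ≤ i - 1, so z j ≤ z (i-1) < z j
        rcases eq_or_lt_of_le (Nat.le_pred_of_lt h) with h' | h'
        · rw [h'] at hx1; exact absurd hx1 (lt_irrefl _)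
        · exact absurd (lt_trans (hzm j (i-1) h' (by omega)) hx1) (lt_irrefl _)
      · rcases eq_or_lt_of_le h with h' | h'
        · rw [← h'] at hx2; exact absurd hx2 (lt_irrefl _)
        · exact absurd (lt_trans hx2 (hzm i j h' hj)) (lt_irrefl _)
    · rw [if_neg hik'] at hx
      simp only [mem_Ioi] at hx
      rcases eq_or_lt_of_le (Nat.le_pred_of_lt hj) with h' | h'
      · rw [h'] at hx; exact absurd hx (lt_irrefl _)
      · exact absurd (lt_trans hx (hzm j (k-1) h' (by omega))) (lt_irrefl _)

/-- Consecutive zeros have no zero strictly between them. -/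
lemma no_zero_between {φ : ℝ → ℝ} {k : ℕ} {z : ℕ → ℝ}
    (hzm : ∀ i j, i < j → j < k → z i < z j)
    (hzall : ∀ x, φ x = 0 → ∃ j, j < k ∧ z j = x)
    {i : ℕ} (hi : i + 1 < k) : ∀ x ∈ Ioo (z i) (z (i+1)), φ x ≠ 0 := by
  intro x hx hφx
  obtain ⟨j, hj, hzj⟩ := hzall x hφx
  subst hzj
  rcases lt_or_ge j (i+1) with h | h
  · rcases eq_or_lt_of_le (Nat.lt_succ_iff.1 h) with h' | h'
    · rw [h'] at hx; exact absurd hx.1 (lt_irrefl _)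
    · exact absurd (lt_trans (hzm j i h' (by omega)) hx.1) (lt_irrefl _)
  · rcases eq_or_lt_of_le h with h' | h'
    · rw [← h'] at hx; exact absurd hx.2 (lt_irrefl _)
    · exact absurd (lt_trans hx.2 (hzm (i+1) j h' hj)) (lt_irrefl _)

/-- No zeros beyond the last zero. -/
lemma no_zero_tailR {φ : ℝ → ℝ} {k : ℕ} {z : ℕ → ℝ}
    (hzm : ∀ i j, i < j → j < k → z i < z j)
    (hzall : ∀ x, φ x = 0 → ∃ j, j < k ∧ z j = x)
    (hk : 1 ≤ k) : ∀ x, z (k-1) < x → φ x ≠ 0 := by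
  intro x hx hφx
  obtain ⟨j, hj, hzj⟩ := hzall x hφx
  subst hzj
  rcases eq_or_lt_of_le (Nat.le_pred_of_lt hj) with h' | h'
  · rw [h'] at hx; exact absurd hx (lt_irrefl _)
  · exact absurd (lt_trans hx (hzm j (k-1) h' (by omega))) (lt_irrefl _)

/-! ### The induction step of the nesting chain -/

lemma inj_reflect {φ ψ : ℝ → ℝ} (hinj : Function.Injective fun x => (φ x, ψ x)) :
    Function.Injective fun x => ((fun y => φ (-y)) x, (fun y => -ψ (-y)) x) := by
  intro x y h
  simp only [Prod.mk.injEq, neg_inj] at h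
  have := hinj (a₁ := -x) (a₂ := -y) (by simp only [Prod.mk.injEq]; exact h)
  exact neg_injective this

lemma chain_step_pos {φ ψ χ : ℝ → ℝ} (N : Nice φ ψ χ) (k : ℕ) (z : ℕ → ℝ) (D : ℕ → ℝ)
    (hz0 : ∀ j, j < k → φ (z j) = 0)
    (hzm : ∀ i j, i < j → j < k → z i < z j)
    (hzall : ∀ x, φ x = 0 → ∃ j, j < k ∧ z j = x)
    (hD0 : D 0 = 0) (hDs : ∀ j, j < k → D (j+1) = |ψ (z j)|)
    (i : ℕ) (hik : i + 2 ≤ k)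
    (hpos : ∀ x ∈ idxI z k i, 0 < φ x)
    (hD : D i < D (i+2)) :
    (i + 2 < k → D (i+1) < D (i+3)) ∧ (i + 2 = k → False) := by
  have hik' : i < k := by omega
  have hik1 : i + 1 < k := by omega
  have hcontψr : Continuous (fun x => -ψ (-x)) := (N.contψ.comp continuous_neg).neg
  -- ### Hump of the interval I_i (positive)
  have hump1 : ∃ (c : ℝ) (S : Set ℝ) (l : Filter ℝ),
      c < z i ∧ ψ c = 0 ∧ ψ (z i) < 0 ∧
      EntryPkg φ ψ S l c (D i) ∧
      EntryPkg (fun x => φ (-x)) (fun x => -ψ (-x))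
        (Ioo (-(z i)) (-c)) (𝓝[>] (-(z i))) (-c) (D (i+1)) := by
    by_cases hi0 : i = 0
    · subst hi0
      have hpos' : ∀ x, x < z 0 → 0 < φ x := by
        intro x hx
        apply hpos
        unfold idxI
        rw [if_pos rfl]
        exact hx
      obtain ⟨c, hcb, hψc, hψb, pkgE, pkgX⟩ := humpL N (hz0 0 (by omega)) hpos'
      refine ⟨c, Iio c, atBot, hcb, hψc, hψb, by rw [hD0]; exact pkgE, ?_⟩
      have hw : -ψ (z 0) = D 1 := by
        rw [hDs 0 (by omega), abs_of_neg hψb]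
      rwa [hw] at pkgX
    · have hzlt : z (i-1) < z i := hzm (i-1) i (by omega) hik'
      have hpos' : ∀ x ∈ Ioo (z (i-1)) (z i), 0 < φ x := by
        intro x hx
        apply hpos
        unfold idxI
        rw [if_neg hi0, if_pos hik']
        exact hx
      obtain ⟨c, hcIoo, hψc, hψa, hψb, pkgE, pkgX⟩ := humpI N hzlt
        (hz0 (i-1) (by omega)) (hz0 i hik') hpos'
      refine ⟨c, Ioo (z (i-1)) c, 𝓝[>] (z (i-1)), hcIoo.2, hψc, hψb, ?_, ?_⟩
      · have hw : ψ (z (i-1)) = D i := by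
          have h1 := hDs (i-1) (by omega)
          rw [show (i-1)+1 = i by omega] at h1
          rw [h1, abs_of_pos hψa]
        rwa [hw] at pkgE
      · have hw : -ψ (z i) = D (i+1) := by
          rw [hDs i hik', abs_of_neg hψb]
        rwa [hw] at pkgX
  obtain ⟨c₁, S₁, l₁, hc₁lt, hψc₁, hexit₁, E₁, X₁⟩ := hump1
  -- ### Interval I_{i+1} is negative
  have hz_lt1 : z i < z (i+1) := hzm i (i+1) (by omega) hik1
  have negI1 : ∀ x ∈ Ioo (z i) (z (i+1)), φ x < 0 := by
    have hnz := no_zero_between hzm hzall hik1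
    rcases sign_dichotomy N.contφ ordConnected_Ioo hnz with h | h
    · exfalso
      obtain ⟨y, hy1, hy2⟩ := ((ev_neg_right (N.hd1 (z i)) (hz0 i hik') hexit₁).and
        (Ioo_mem_nhdsGT_of_mem (show z i ∈ Ico (z i) (z (i+1)) from ⟨le_refl _, hz_lt1⟩))).exists
      exact absurd (h y hy2) (not_lt.2 (le_of_lt hy1))
    · exact h
  -- hump of I_{i+1} for the negated system, to get the exit slope
  have hψz1pos : 0 < ψ (z (i+1)) := by
    obtain ⟨c', hc', hψc', hψa', hψb', _, _⟩ := humpI N.neg hz_lt1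
      (by simpa using hz0 i hik') (by simpa using hz0 (i+1) hik1)
      (fun x hx => by simpa using negI1 x hx)
    simpa using hψb'
  refine ⟨?_, ?_⟩
  · -- ### case i + 2 < k : interval I_{i+2} is interior
    intro hlt
    have hz_lt2 : z (i+1) < z (i+2) := hzm (i+1) (i+2) (by omega) hlt
    have posI2 : ∀ x ∈ Ioo (z (i+1)) (z (i+2)), 0 < φ x := by
      have hnz := no_zero_between hzm hzall hlt
      rcases sign_dichotomy N.contφ ordConnected_Ioo hnz with h | h
      · exact h
      · exfalso
        obtain ⟨y, hy1, hy2⟩ := ((ev_pos_right (N.hd1 (z (i+1))) (hz0 (i+1) hik1) hψz1pos).and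
          (Ioo_mem_nhdsGT_of_mem (show z (i+1) ∈ Ico (z (i+1)) (z (i+2)) from
            ⟨le_refl _, hz_lt2⟩))).exists
        exact absurd (h y hy2) (not_lt.2 (le_of_lt hy1))
    obtain ⟨c₃, hc₃Ioo, hψc₃, hψa₃, hψb₃, E₃, X₃⟩ := humpI N hz_lt2
      (hz0 (i+1) hik1) (hz0 (i+2) hlt) posI2
    -- rewrite the w-values of the packages
    have hwE₃ : ψ (z (i+1)) = D (i+2) := by
      rw [hDs (i+1) hik1, abs_of_pos hψa₃]
    have hwX₃ : -ψ (z (i+2)) = D (i+3) := by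
      rw [hDs (i+2) hlt, abs_of_neg hψb₃]
    rw [hwE₃] at E₃
    rw [hwX₃] at X₃
    -- entry comparison
    have hφcc : φ c₁ < φ c₃ := by
      refine crossing N.hd1 N.contψ N.inj E₁ E₃ ?_ ?_ hD
      · intro x hx1 hx2
        have h1 : x < z i := lt_trans (E₁.ltb x hx1) hc₁lt
        have h2 : z (i+1) < x := hx2.1
        linarith
      · intro h
        rw [h] at hc₁lt
        have : z i < c₃ := lt_trans hz_lt1 hc₃Ioo.1
        linarith
    -- exit comparison
    by_contra hcon
    push_neg at hcon
    rcases eq_or_lt_of_le hcon with heq | hlt'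
    · -- equal exit speeds: injectivity violated at the zeros
      have hψeq : ψ (z i) = ψ (z (i+2)) := by
        have h1 : D (i+1) = -ψ (z i) := by rw [hDs i hik', abs_of_neg hexit₁]
        have h2 : D (i+3) = -ψ (z (i+2)) := by rw [hDs (i+2) hlt, abs_of_neg hψb₃]
        rw [h1, h2] at heq
        linarith
      have : z i = z (i+2) := N.inj (by
        simp only [Prod.mk.injEq]
        exact ⟨(hz0 i hik').trans (hz0 (i+2) hlt).symm, hψeq⟩)
      have := hzm i (i+2) (by omega) hlt
      linarith
    · -- strict reversal: apply the crossing lemma to the reflected system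
      have hrev := crossing (hd_reflect N.hd1) hcontψr (inj_reflect N.inj) X₃ X₁ ?_ ?_ hlt'
      · have h1 : φ (-(-c₃)) < φ (-(-c₁)) := hrev
        simp only [neg_neg] at h1
        linarith
      · intro x hx1 hx2
        have h1 : x < -c₃ := hx1.2
        have h2 : -(z i) < x := hx2.1
        have h3 : z (i+1) < c₃ := hc₃Ioo.1
        linarith
      · intro h
        have : c₃ = c₁ := by linarith [neg_injective h]
        have h3 : z (i+1) < c₃ := hc₃Ioo.1
        linarith
  · -- ### case i + 2 = k : interval I_{i+2} is the right tail
    intro heq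
    have hk1 : k - 1 = i + 1 := by omega
    have posI2 : ∀ x, z (i+1) < x → 0 < φ x := by
      have hnz : ∀ x, z (i+1) < x → φ x ≠ 0 := by
        have := no_zero_tailR hzm hzall (by omega : 1 ≤ k)
        rw [hk1] at this
        exact this
      have hdi : (∀ x ∈ Ioi (z (i+1)), 0 < φ x) ∨ (∀ x ∈ Ioi (z (i+1)), φ x < 0) :=
        sign_dichotomy N.contφ ordConnected_Ioi (fun x hx => hnz x hx)
      rcases hdi with h | h
      · exact fun x hx => h x hx
      · exfalso
        obtain ⟨y, hy1, hy2⟩ := ((ev_pos_right (N.hd1 (z (i+1))) (hz0 (i+1) hik1) hψz1pos).and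
          self_mem_nhdsWithin).exists
        exact absurd (h y hy2) (not_lt.2 (le_of_lt hy1))
    obtain ⟨c₃, hc₃gt, hψc₃, hψa₃, E₃, X₃⟩ := humpR N (hz0 (i+1) hik1) posI2
    have hwE₃ : ψ (z (i+1)) = D (i+2) := by
      rw [hDs (i+1) hik1, abs_of_pos hψa₃]
    rw [hwE₃] at E₃
    -- entry comparison
    have hφcc : φ c₁ < φ c₃ := by
      refine crossing N.hd1 N.contψ N.inj E₁ E₃ ?_ ?_ hD
      · intro x hx1 hx2
        have h1 : x < z i := lt_trans (E₁.ltb x hx1) hc₁lt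
        have h2 : z (i+1) < x := hx2.1
        linarith
      · intro h
        rw [h] at hc₁lt
        linarith
    -- exit comparison: the tail exit has speed 0 < D (i+1)
    have hD1pos : 0 < D (i+1) := by
      rw [hDs i hik', abs_of_neg hexit₁]
      linarith
    have hrev := crossing (hd_reflect N.hd1) hcontψr (inj_reflect N.inj) X₃ X₁ ?_ ?_ hD1pos
    · have h1 : φ (-(-c₃)) < φ (-(-c₁)) := hrev
      simp only [neg_neg] at h1
      linarith
    · intro x hx1 hx2
      have h1 : x < -c₃ := hx1
      have h2 : -(z i) < x := hx2.1
      linarith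
    · intro h
      have : c₃ = c₁ := by linarith [neg_injective h]
      linarith

lemma chain_step {φ ψ χ : ℝ → ℝ} (N : Nice φ ψ χ) (k : ℕ) (z : ℕ → ℝ) (D : ℕ → ℝ)
    (hz0 : ∀ j, j < k → φ (z j) = 0)
    (hzm : ∀ i j, i < j → j < k → z i < z j)
    (hzall : ∀ x, φ x = 0 → ∃ j, j < k ∧ z j = x)
    (hD0 : D 0 = 0) (hDs : ∀ j, j < k → D (j+1) = |ψ (z j)|)
    (i : ℕ) (hik : i + 2 ≤ k) (hD : D i < D (i+2)) :
    (i + 2 < k → D (i+1) < D (i+3)) ∧ (i + 2 = k → False) := by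
  rcases sign_dichotomy N.contφ (idxI_ordConnected z k i)
    (idxI_no_zero hzm hzall (by omega) (by omega : i ≤ k)) with hp | hn
  · exact chain_step_pos N k z D hz0 hzm hzall hD0 hDs i hik hp hD
  · refine chain_step_pos N.neg k z D
      (fun j hj => by simpa using hz0 j hj) hzm
      (fun x hx => hzall x (by simpa using hx)) hD0
      (fun j hj => by simpa [abs_neg] using hDs j hj)
      i hik (fun x hx => by simpa using hn x hx) hD

/-- **Part A**: a time slice satisfying the side conditions has at most one zero. -/
theorem partA {φ ψ χ : ℝ → ℝ} (N : Nice φ ψ χ) (zfin : {x | φ x = 0}.Finite) :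
    ∀ a b, φ a = 0 → φ b = 0 → a = b := by
  by_contra hcon
  push_neg at hcon
  obtain ⟨a, b, ha, hb, hab⟩ := hcon
  have haZ : a ∈ zfin.toFinset := zfin.mem_toFinset.2 ha
  have hbZ : b ∈ zfin.toFinset := zfin.mem_toFinset.2 hb
  have hk2 : 1 < zfin.toFinset.card := Finset.one_lt_card.2 ⟨a, haZ, b, hbZ, hab⟩
  set k := zfin.toFinset.card with hk
  set e := zfin.toFinset.orderIsoOfFin hk.symm with he
  set z : ℕ → ℝ := fun j => if h : j < k then (e ⟨j, h⟩ : ℝ) else 0 with hz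
  have hz0 : ∀ j, j < k → φ (z j) = 0 := by
    intro j hj
    simp only [hz, dif_pos hj]
    exact zfin.mem_toFinset.1 (e ⟨j, hj⟩).2
  have hzm : ∀ i j, i < j → j < k → z i < z j := by
    intro i j hij hj
    have hi : i < k := lt_trans hij hj
    simp only [hz, dif_pos hi, dif_pos hj]
    have h1 : e ⟨i, hi⟩ < e ⟨j, hj⟩ := by
      rw [e.lt_iff_lt]
      exact Fin.mk_lt_mk.2 hij
    exact h1
  have hzall : ∀ x, φ x = 0 → ∃ j, j < k ∧ z j = x := by
    intro x hx
    obtain ⟨j, hj⟩ := e.surjective ⟨x, zfin.mem_toFinset.2 hx⟩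
    refine ⟨j.1, j.2, ?_⟩
    simp only [hz, dif_pos j.2]
    rw [show (⟨j.1, j.2⟩ : Fin k) = j from rfl, hj]
  set D : ℕ → ℝ := fun j => if j = 0 ∨ k < j then 0 else |ψ (z (j-1))| with hD
  have hD0 : D 0 = 0 := by simp [hD]
  have hDs : ∀ j, j < k → D (j+1) = |ψ (z j)| := by
    intro j hj
    simp only [hD]
    rw [if_neg (by omega)]
    simp
  have chain : ∀ i, i + 2 ≤ k → D i < D (i+2) := by
    intro i
    induction i with
    | zero =>
      intro h2
      rw [hD0, show (0+2 : ℕ) = 1 + 1 from rfl, hDs 1 (by omega)]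
      exact abs_pos.2 (N.simp1 (z 1) (hz0 1 (by omega)))
    | succ n ih =>
      intro h2
      have hn2 : n + 2 ≤ k := by omega
      have hstep := chain_step N k z D hz0 hzm hzall hD0 hDs n hn2 (ih hn2)
      have := hstep.1 (by omega)
      convert this using 2 <;> omega
  obtain ⟨k', hk'⟩ : ∃ k', k = k' + 2 := ⟨k - 2, by omega⟩
  exact (chain_step N k z D hz0 hzm hzall hD0 hDs k' (by omega)
    (chain k' (by omega))).2 (by omega)

/-! ### Part B: the comparison principle -/


lemma secondDeriv_nonneg_at_min {W Wd : ℝ → ℝ} (hd : ∀ x, HasDerivAt W (Wd x) x)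
    {x₀ d2 : ℝ} (hd2 : HasDerivAt Wd d2 x₀) (hmin : ∀ x, W x₀ ≤ W x) : 0 ≤ d2 := by
  by_contra hcon
  push_neg at hcon
  have hloc : IsLocalMin W x₀ := Filter.Eventually.of_forall hmin
  have hWd0 : Wd x₀ = 0 := hloc.hasDerivAt_eq_zero (hd x₀)
  have hev : ∀ᶠ x in 𝓝[>] x₀, Wd x < 0 := ev_neg_right hd2 hWd0 hcon
  obtain ⟨u, hu, hsub⟩ := mem_nhdsGT_iff_exists_Ioo_subset.1 hev
  set y := (x₀ + u) / 2 with hy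
  have hy1 : x₀ < y := by rw [hy]; simp only [mem_Ioi] at hu; linarith
  have hy2 : y < u := by rw [hy]; simp only [mem_Ioi] at hu; linarith
  have : W y < W x₀ := anti_pair hd hy1 fun z hz => hsub ⟨hz.1, lt_trans hz.2 hy2⟩
  exact absurd (hmin y) (not_le.2 this)

lemma left_min_deriv_nonpos {θ : ℝ → ℝ} {s₀ d : ℝ} (hd : HasDerivAt θ d s₀) {t : ℝ}
    (ht : t < s₀) (hmin : ∀ s, t ≤ s → s ≤ s₀ → θ s₀ ≤ θ s) : d ≤ 0 := by
  have hs : Tendsto (slope θ s₀) (𝓝[≠] s₀) (𝓝 d) := hasDerivAt_iff_tendsto_slope.1 hd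
  have hle : 𝓝[<] s₀ ≤ 𝓝[≠] s₀ := nhdsWithin_mono _ fun x hx => ne_of_lt hx
  have hev : ∀ᶠ s in 𝓝[<] s₀, slope θ s₀ s ≤ 0 := by
    filter_upwards [Ioo_mem_nhdsLT_of_mem (show s₀ ∈ Ioc t s₀ from ⟨ht, le_refl _⟩)] with s hs'
    rw [slope_def_field]
    apply div_nonpos_of_nonneg_of_nonpos
    · have := hmin s (le_of_lt hs'.1) (le_of_lt hs'.2)
      linarith
    · linarith [hs'.2]
  exact le_of_tendsto (hs.mono_left hle) hev

/-- The comparison principle: nonnegativity is preserved forward in time for bounded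
solutions of `u_t = u_xx + f(u)` with `f` Lipschitz and `f 0 = 0`. -/
lemma maxprin (f : ℝ → ℝ) (K : NNReal) (hK : LipschitzWith K f) (hf0 : f 0 = 0)
    (U : ℝ → ℝ → ℝ) (M : ℝ) (hbd : ∀ x s : ℝ, |U x s| ≤ M)
    (hcont : Continuous fun p : ℝ × ℝ => U p.1 p.2)
    (hdx : ∀ x s : ℝ, DifferentiableAt ℝ (fun y => U y s) x)
    (hdx2 : ∀ x s : ℝ, DifferentiableAt ℝ (fun y => pdx U y s) x)
    (hdt : ∀ x s : ℝ, DifferentiableAt ℝ (fun s' => U x s') s)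
    (hpde : ∀ x s : ℝ, pdt U x s = pdxx U x s + f (U x s))
    (t t' : ℝ) (htt : t ≤ t') (h0 : ∀ x, 0 ≤ U x t) : ∀ x, 0 ≤ U x t' := by
  rcases eq_or_lt_of_le htt with rfl | htt'
  · exact h0
  by_contra hcon
  push_neg at hcon
  obtain ⟨xb, hxb⟩ := hcon
  set α : ℝ := (K : ℝ) + 3 with hα
  have hαpos : 0 < α := by positivity
  set ε : ℝ := -U xb t' / (2 * Real.exp (α * (t' - t))) with hε
  have hεpos : 0 < ε := by
    rw [hε]
    apply div_pos (by linarith) (by positivity)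
  set g : ℝ → ℝ → ℝ := fun x s => ε * (1 + (x - xb)^2) * Real.exp (α * (s - t)) with hg
  set V : ℝ → ℝ → ℝ := fun x s => U x s + g x s with hV
  have hexp1 : ∀ s, t ≤ s → 1 ≤ Real.exp (α * (s - t)) := by
    intro s hs
    rw [show (1:ℝ) = Real.exp 0 by simp]
    apply Real.exp_le_exp.2
    have h1 : 0 ≤ s - t := by linarith
    exact mul_nonneg (le_of_lt hαpos) h1
  have hgpos : ∀ x s, t ≤ s → 0 < g x s := by
    intro x s hs
    simp only [hg]
    have h1 : (0:ℝ) < 1 + (x - xb)^2 := by positivity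
    positivity
  have hM0 : 0 ≤ M := le_trans (abs_nonneg _) (hbd 0 0)
  -- the key positivity claim
  have key : ∀ x s, t ≤ s → s ≤ t' → 0 < V x s := by
    by_contra hbad
    push_neg at hbad
    obtain ⟨x₂, s₂, hs₂t, hs₂t', hVle⟩ := hbad
    set R := Real.sqrt (M / ε) with hR
    have hRnn : 0 ≤ R := Real.sqrt_nonneg _
    have hradius : ∀ x s, t ≤ s → V x s ≤ 0 → |x - xb| ≤ R := by
      intro x s hs hVxs
      have h1 : ε * (1 + (x - xb)^2) * Real.exp (α * (s - t)) ≤ -U x s := by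
        simp only [hV, hg] at hVxs
        linarith
      have h2 : -U x s ≤ M := by
        have := hbd x s
        rw [abs_le] at this
        linarith [this.1]
      have h3 : ε * (1 + (x - xb)^2) ≤ M := by
        have he := hexp1 s hs
        have hp : (0:ℝ) < ε * (1 + (x - xb)^2) := by positivity
        nlinarith
      have h4 : (x - xb)^2 ≤ M / ε := by
        rw [le_div_iff₀ hεpos]
        nlinarith
      calc |x - xb| = Real.sqrt ((x - xb)^2) := (Real.sqrt_sq_eq_abs _).symm
        _ ≤ R := Real.sqrt_le_sqrt h4
    set B : Set (ℝ × ℝ) := {p : ℝ × ℝ | p.1 ∈ Icc (xb - R) (xb + R) ∧ p.2 ∈ Icc t t' ∧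
      V p.1 p.2 ≤ 0} with hB
    have hgcont : Continuous fun p : ℝ × ℝ => g p.1 p.2 := by
      simp only [hg]
      exact ((continuous_const.mul (continuous_const.add
        ((continuous_fst.sub continuous_const).pow 2))).mul
        (Real.continuous_exp.comp (continuous_const.mul
          (continuous_snd.sub continuous_const))))
    have hVcont : Continuous fun p : ℝ × ℝ => V p.1 p.2 := hcont.add hgcont
    have hBclosed : IsClosed B := by
      apply IsClosed.inter
      · exact isClosed_Icc.preimage continuous_fst
      apply IsClosed.inter
      · exact isClosed_Icc.preimage continuous_snd
      · exact isClosed_le hVcont continuous_const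
    have hBcompact : IsCompact B := by
      apply IsCompact.of_isClosed_subset ((isCompact_Icc).prod (isCompact_Icc)) hBclosed
      rintro ⟨x, s⟩ ⟨h1, h2, h3⟩
      exact ⟨h1, h2⟩
    have hBne : B.Nonempty := by
      refine ⟨(x₂, s₂), ?_, ⟨hs₂t, hs₂t'⟩, hVle⟩
      have := hradius x₂ s₂ hs₂t hVle
      rw [abs_le] at this
      constructor <;> [linarith [this.1]; linarith [this.2]]
    obtain ⟨⟨xs, ss⟩, hmemB, hminB⟩ := hBcompact.exists_isMinOn hBne
      (continuous_snd.continuousOn)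
    simp only [hB, Set.mem_setOf_eq] at hmemB
    obtain ⟨hmem1, hmem2, hVss⟩ := hmemB
    have hsst : t < ss := by
      rcases eq_or_lt_of_le hmem2.1 with h | h
      · exfalso
        have hgp := hgpos xs t (le_refl t)
        have h0' := h0 xs
        simp only [hV] at hVss
        rw [← h] at hVss
        linarith
      · exact h
    have hnobad : ∀ x s, t ≤ s → s < ss → 0 < V x s := by
      intro x s hs hss
      by_contra hc
      push_neg at hc
      have hst' : s ≤ t' := le_trans (le_of_lt hss) hmem2.2
      have hxR := hradius x s hs hc
      rw [abs_le] at hxR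
      have hmB : (x, s) ∈ B := by
        simp only [hB, Set.mem_setOf_eq]
        exact ⟨⟨by linarith [hxR.1], by linarith [hxR.2]⟩, ⟨hs, hst'⟩, hc⟩
      have h2 : ss ≤ s := hminB hmB
      exact absurd hss (not_lt.2 h2)
    have hsliceV : ∀ x, 0 ≤ V x ss := by
      intro x
      by_contra hc
      push_neg at hc
      have hctsV : Continuous fun s => V x s := by
        have := hVcont.comp (Continuous.prodMk_right x : Continuous fun s : ℝ => (x, s))
        exact this
      have hev : ∀ᶠ s in 𝓝[<] ss, V x s < 0 :=
        ((hctsV.tendsto ss).eventually_lt_const hc).filter_mono nhdsWithin_le_nhds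
      obtain ⟨s'', hs''1, hs''2⟩ := (hev.and
        (Ioo_mem_nhdsLT_of_mem (show ss ∈ Ioc t ss from ⟨hsst, le_refl _⟩))).exists
      exact absurd (hnobad x s'' (le_of_lt hs''2.1) hs''2.2) (not_lt.2 (le_of_lt hs''1))
    have hVzero : V xs ss = 0 := by
      have h1 := hsliceV xs
      simp only [hV] at hVss h1 ⊢
      linarith
    -- spatial second-derivative inequality at the touching point
    set E := Real.exp (α * (ss - t)) with hE
    have hEpos : 0 < E := Real.exp_pos _
    set W : ℝ → ℝ := fun x => U x ss + ε * (1 + (x - xb)^2) * E with hW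
    set Wd : ℝ → ℝ := fun x => pdx U x ss + ε * 2 * E * (x - xb) with hWd
    have hWder : ∀ x, HasDerivAt W (Wd x) x := by
      intro x
      have h1 : HasDerivAt (fun y => U y ss) (pdx U x ss) x := (hdx x ss).hasDerivAt
      have h2 : HasDerivAt (fun y : ℝ => ε * (1 + (y - xb)^2) * E)
          (ε * 2 * E * (x - xb)) x := by
        have h3 : HasDerivAt (fun y : ℝ => (y - xb)^2) (2 * (x - xb)) x := by
          have := ((hasDerivAt_id x).sub_const xb).pow 2
          refine this.congr_deriv ?_
          norm_num
        have h4 := ((h3.const_add 1).const_mul ε).mul_const E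
        refine h4.congr_deriv ?_
        ring
      exact h1.add h2
    have hWdder : HasDerivAt Wd (pdxx U xs ss + ε * 2 * E) xs := by
      have h1 : HasDerivAt (fun y => pdx U y ss) (pdxx U xs ss) xs := (hdx2 xs ss).hasDerivAt
      have h2 : HasDerivAt (fun y : ℝ => ε * 2 * E * (y - xb)) (ε * 2 * E) xs := by
        have := ((hasDerivAt_id xs).sub_const xb).const_mul (ε * 2 * E)
        refine this.congr_deriv ?_
        ring
      exact h1.add h2
    have hWmin : ∀ x, W xs ≤ W x := by
      intro x
      have h1 : W xs = V xs ss := by simp only [hW, hV, hg, hE]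
      have h2 : W x = V x ss := by simp only [hW, hV, hg, hE]
      rw [h1, h2, hVzero]
      exact hsliceV x
    have h2nd : 0 ≤ pdxx U xs ss + ε * 2 * E :=
      secondDeriv_nonneg_at_min hWder hWdder hWmin
    -- time-derivative inequality at the touching point
    set θ : ℝ → ℝ := fun s => U xs s + ε * (1 + (xs - xb)^2) * Real.exp (α * (s - t)) with hθ
    have hθder : HasDerivAt θ (pdt U xs ss + ε * (1 + (xs - xb)^2) * (α * E)) ss := by
      have h1 : HasDerivAt (fun s => U xs s) (pdt U xs ss) ss := (hdt xs ss).hasDerivAt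
      have h2 : HasDerivAt (fun s : ℝ => ε * (1 + (xs - xb)^2) * Real.exp (α * (s - t)))
          (ε * (1 + (xs - xb)^2) * (α * E)) ss := by
        have h3 : HasDerivAt (fun s : ℝ => α * (s - t)) α ss := by
          have := ((hasDerivAt_id ss).sub_const t).const_mul α
          refine this.congr_deriv ?_
          ring
        have h4 := h3.exp
        have h5 := h4.const_mul (ε * (1 + (xs - xb)^2))
        refine h5.congr_deriv ?_
        rw [hE]
        ring
      exact h1.add h2
    have hθmin : ∀ s, t ≤ s → s ≤ ss → θ ss ≤ θ s := by
      intro s hs hsss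
      have h1 : θ s = V xs s := by simp only [hθ, hV, hg]
      have h2 : θ ss = V xs ss := by simp only [hθ, hV, hg]
      rw [h1, h2, hVzero]
      rcases eq_or_lt_of_le hsss with h | h
      · rw [h, hVzero]
      · exact le_of_lt (hnobad xs s hs h)
    have hθle : pdt U xs ss + ε * (1 + (xs - xb)^2) * (α * E) ≤ 0 :=
      left_min_deriv_nonpos hθder hsst hθmin
    -- the Lipschitz bound on the nonlinearity
    set G : ℝ := ε * (1 + (xs - xb)^2) * E with hG
    have hGpos : 0 < G := by rw [hG]; positivity
    have hUval : U xs ss = -G := by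
      have hVz := hVzero
      simp only [hV, hg] at hVz
      simp only [hG, hE]
      linarith
    have hflb : -((K : ℝ) * G) ≤ f (U xs ss) := by
      have h1 := hK.dist_le_mul (U xs ss) 0
      rw [Real.dist_eq, Real.dist_eq, hf0, sub_zero, sub_zero] at h1
      have h2 : |U xs ss| = G := by rw [hUval, abs_neg, abs_of_pos hGpos]
      rw [h2] at h1
      have := abs_le.1 h1
      linarith [this.1]
    -- combine everything
    have hpde' := hpde xs ss
    have hεE : 0 < ε * E := by positivity
    have hX2 : 0 ≤ ε * E * (xs - xb)^2 := by positivity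
    have hGsplit : G = ε * E + ε * E * (xs - xb)^2 := by rw [hG]; ring
    have hαG : ε * (1 + (xs - xb)^2) * (α * E) = α * G := by rw [hG]; ring
    rw [hαG] at hθle
    have hα3 : α * G = (K : ℝ) * G + 3 * G := by rw [hα]; ring
    nlinarith [h2nd, hθle, hflb, hpde', hGsplit, hεE, hX2]
  -- conclude: contradiction at (xb, t')
  have hfin := key xb t' (le_of_lt htt') (le_refl _)
  simp only [hV, hg] at hfin
  have hcalc : ε * (1 + (xb - xb)^2) * Real.exp (α * (t' - t)) = -U xb t' / 2 := by
    rw [hε]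
    have hexpne : Real.exp (α * (t' - t)) ≠ 0 := ne_of_gt (Real.exp_pos _)
    field_simp
    ring
  rw [hcalc] at hfin
  linarith


/-- in case (T2) (`(U, U_x) → (0,0)` at spatial infinity), if `U(·,t₀)` has a
zero then `U(·,t)` has exactly one zero for every `t < t₀`. -/
theorem statement15 (f : ℝ → ℝ) (hf : LocallyLipschitz f) (hND : CondND f) (hMF : CondMF f)
    (hf0 : f 0 = 0) (hf0' : 0 < deriv f 0)
    (U : ℝ → ℝ → ℝ) (hU : IsEntireSolution f U)
    (hUx : ¬ ∀ x t : ℝ, pdx U x t = 0)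
    (Pi0 : Set (ℝ × ℝ)) (hPi0 : ∃ z ∈ P0 f, Pi0 = connectedComponentIn (P0 f) z)
    (hPi00 : ((0 : ℝ), (0 : ℝ)) ∈ closure Pi0)
    (hc0 : ∀ t x : ℝ, (U x t, pdx U x t) ∈ Pi0)
    (hside : SideConds U)
    (hlim : ∀ t : ℝ,
      Tendsto (fun x => U x t) atBot (nhds 0) ∧ Tendsto (fun x => U x t) atTop (nhds 0) ∧
      Tendsto (fun x => pdx U x t) atBot (nhds 0) ∧
      Tendsto (fun x => pdx U x t) atTop (nhds 0))
    (t₀ : ℝ) (hz : ∃ x : ℝ, U x t₀ = 0) :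
    ∀ t : ℝ, t < t₀ → ∃! x : ℝ, U x t = 0 := by
  intro t ht
  -- unpack the entire-solution and side-condition packages
  obtain ⟨⟨M, hM⟩, hcont, hdx, hdx2, hdt, hpdxc, hpdxxc, hpdtc, hpde⟩ := hU
  obtain ⟨⟨m, hm⟩, hsimple, hlims, hinj, hminmax⟩ := hside
  obtain ⟨⟨K, hK⟩, -⟩ := hMF
  -- the static bundle at each time slice
  have hNice : ∀ s : ℝ, Nice (fun x => U x s) (fun x => pdx U x s) (fun x => pdxx U x s) := by
    intro s
    exact ⟨fun x => (hdx x s).hasDerivAt, fun x => (hdx2 x s).hasDerivAt,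
      (hm s).2.2.1, fun x h => (hsimple x s).1 h, fun x h => (hsimple x s).2 h,
      (hlim s).1, (hlim s).2.1, (hlim s).2.2.1, (hlim s).2.2.2,
      hinj s, fun x h => (hminmax s x).1 h, fun x h => (hminmax s x).2 h⟩
  -- both signs are attained at time t₀ (simple zero)
  obtain ⟨x₀, hx₀⟩ := hz
  have hψx₀ : pdx U x₀ t₀ ≠ 0 := (hsimple x₀ t₀).1 hx₀
  have hd₀ : HasDerivAt (fun y => U y t₀) (pdx U x₀ t₀) x₀ := (hdx x₀ t₀).hasDerivAt
  have hbs : (∃ x, U x t₀ < 0) ∧ (∃ x, 0 < U x t₀) := by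
    rcases hψx₀.lt_or_gt with h | h
    · obtain ⟨y1, hy1⟩ := (ev_pos_left hd₀ hx₀ h).exists
      obtain ⟨y2, hy2⟩ := (ev_neg_right hd₀ hx₀ h).exists
      exact ⟨⟨y2, hy2⟩, ⟨y1, hy1⟩⟩
    · obtain ⟨y1, hy1⟩ := (ev_neg_left hd₀ hx₀ h).exists
      obtain ⟨y2, hy2⟩ := (ev_pos_right hd₀ hx₀ h).exists
      exact ⟨⟨y1, hy1⟩, ⟨y2, hy2⟩⟩
  -- existence of a zero at time t via the comparison principle
  have hex : ∃ x, U x t = 0 := by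
    by_contra hno
    push_neg at hno
    have hsgn : (∀ x, 0 < U x t) ∨ (∀ x, U x t < 0) := by
      rcases sign_dichotomy ((hNice t).contφ) (s := Set.univ) Set.ordConnected_univ
        (fun x _ => hno x) with h | h
      · exact Or.inl fun x => h x (Set.mem_univ x)
      · exact Or.inr fun x => h x (Set.mem_univ x)
    rcases hsgn with h | h
    · have hmp := maxprin f K hK hf0 U M hM hcont hdx hdx2 hdt hpde t t₀ (le_of_lt ht)
        (fun x => le_of_lt (h x))
      obtain ⟨xneg, hxneg⟩ := hbs.1
      exact absurd (hmp xneg) (not_le.2 hxneg)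
    · -- apply the comparison principle to the negated solution
      set Un : ℝ → ℝ → ℝ := fun x s => -U x s with hUn
      set fn : ℝ → ℝ := fun y => -f (-y) with hfn
      have hpdxn : ∀ x s : ℝ, pdx Un x s = -pdx U x s := by
        intro x s
        exact ((hdx x s).hasDerivAt.neg).deriv
      have hpdtn : ∀ x s : ℝ, pdt Un x s = -pdt U x s := by
        intro x s
        exact ((hdt x s).hasDerivAt.neg).deriv
      have hdxn : ∀ x s : ℝ, DifferentiableAt ℝ (fun y => Un y s) x := by
        intro x s
        exact (hdx x s).neg
      have hdx2n : ∀ x s : ℝ, DifferentiableAt ℝ (fun y => pdx Un y s) x := by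
        intro x s
        have heq : (fun y => pdx Un y s) = fun y => -pdx U y s := funext fun y => hpdxn y s
        rw [heq]
        exact (hdx2 x s).neg
      have hdtn : ∀ x s : ℝ, DifferentiableAt ℝ (fun s' => Un x s') s := by
        intro x s
        exact (hdt x s).neg
      have hpdxxn : ∀ x s : ℝ, pdxx Un x s = -pdxx U x s := by
        intro x s
        have heq : (fun y => pdx Un y s) = fun y => -pdx U y s := funext fun y => hpdxn y s
        show deriv (fun y => pdx Un y s) x = -pdxx U x s
        rw [heq]
        exact ((hdx2 x s).hasDerivAt.neg).deriv
      have hpden : ∀ x s : ℝ, pdt Un x s = pdxx Un x s + fn (Un x s) := by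
        intro x s
        rw [hpdtn, hpdxxn, hpde x s]
        have : fn (Un x s) = -f (U x s) := by simp [hfn, hUn]
        rw [this]
        ring
      have hKn : LipschitzWith K fn := by
        have h1 : LipschitzWith 1 (Neg.neg : ℝ → ℝ) := LipschitzWith.id.neg
        have h2 := (h1.comp hK).comp h1
        have h3 : (1 * K * 1 : NNReal) = K := by simp
        rw [h3] at h2
        exact h2
      have hf0n : fn 0 = 0 := by simp [hfn, hf0]
      have hbdn : ∀ x s : ℝ, |Un x s| ≤ M := by
        intro x s
        simp only [hUn, abs_neg]
        exact hM x s
      have hcontn : Continuous fun p : ℝ × ℝ => Un p.1 p.2 := hcont.neg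
      have hmp := maxprin fn K hKn hf0n Un M hbdn hcontn hdxn hdx2n hdtn hpden t t₀
        (le_of_lt ht) (fun x => by simp only [hUn]; linarith [h x])
      obtain ⟨xpos, hxpos⟩ := hbs.2
      have := hmp xpos
      simp only [hUn] at this
      linarith
  -- uniqueness via Part A
  obtain ⟨xz, hxz⟩ := hex
  refine ⟨xz, hxz, ?_⟩
  intro y hy
  exact partA (hNice t) ((hm t).1) y xz hy hxz
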